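/- For every r₀ > 0 there exists a constant C > 0 such that for all z ∈ ℝ³, the sum over the lattice Σ_{k∈ℤ³} exp(−δ(k,z)/r₀) is at most C. -/

import Mathlib

noncomputable section

open MeasureTheory

/-- The underlying space of the Heisenberg group: `ℝ³`. -/
abbrev H3 : Type := ℝ × ℝ × ℝ

/-- The Heisenberg group law `(p,q,r)∗(p',q',r') = (p+p', q+q', r+r'+2(qp'−pq'))`. -/
def Hmul (x y : H3) : H3 :=
  (x.1 + y.1, x.2.1 + y.2.1, x.2.2 + y.2.2 + 2 * (x.2.1 * y.1 - x.1 * y.2.1))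

/-- The inverse for the Heisenberg group law. -/
def Hinv (x : H3) : H3 := (-x.1, -x.2.1, -x.2.2)

/-- The homogeneous (gauge) norm `‖(p,q,r)‖ = ((p²+q²)²+r²)^(1/4)`. -/
def Hnorm (x : H3) : ℝ := ((x.1 ^ 2 + x.2.1 ^ 2) ^ 2 + x.2.2 ^ 2) ^ ((1 : ℝ) / 4)

/-- The gauge distance `δ(x,y) = ‖x⁻¹∗y‖`. -/
def Hdist (x y : H3) : ℝ := Hnorm (Hmul (Hinv x) y)

/-- The gauge ball `B(x,r)`. -/
def Hball (x : H3) (r : ℝ) : Set H3 := {y | Hdist x y < r}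

/-- The dilation `λ∘(p,q,r) = (λp, λq, λ²r)`. -/
def Hdil (l : ℝ) (x : H3) : H3 := (l * x.1, l * x.2.1, l ^ 2 * x.2.2)

/-- A lattice point of `ℤ³` seen inside `ℝ³`. -/
def latticePt (k : ℤ × ℤ × ℤ) : H3 := ((k.1 : ℝ), (k.2.1 : ℝ), (k.2.2 : ℝ))

/-- The dyadic point `x_{j,k} = 2^{−j}∘k`. -/
def xjk (j : ℤ) (k : ℤ × ℤ × ℤ) : H3 := Hdil ((2 : ℝ) ^ (-j)) (latticePt k)

/-! ### Auxiliary lemmas -/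

lemma exp_pow4_aux (x : ℝ) (hx : 0 ≤ x) : x ^ 4 ≤ 256 * Real.exp x := by
  have h1 : x / 4 ≤ Real.exp (x / 4) := by
    nlinarith [Real.add_one_le_exp (x / 4)]
  have h2 : (x / 4) ^ 4 ≤ Real.exp (x / 4) ^ 4 :=
    pow_le_pow_left₀ (by positivity) h1 4
  have h3 : Real.exp (x / 4) ^ 4 = Real.exp x := by
    rw [← Real.exp_nat_mul]
    norm_num
    ring
  nlinarith [h2, h3]

lemma sqrt_add_one_le_aux (x : ℝ) (hx : 0 ≤ x) : Real.sqrt (x + 1) ≤ Real.sqrt x + 1 := by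
  have h := Real.sq_sqrt hx
  have h2 : x + 1 ≤ (Real.sqrt x + 1) ^ 2 := by nlinarith [Real.sqrt_nonneg x]
  calc Real.sqrt (x + 1) ≤ Real.sqrt ((Real.sqrt x + 1) ^ 2) := Real.sqrt_le_sqrt h2
    _ = Real.sqrt x + 1 := Real.sqrt_sq (by positivity)

lemma sqrt_le_add_one_aux (x : ℝ) (hx : 0 ≤ x) : Real.sqrt x ≤ x + 1 := by
  have h2 : x ≤ (x + 1) ^ 2 := by nlinarith
  calc Real.sqrt x ≤ Real.sqrt ((x + 1) ^ 2) := Real.sqrt_le_sqrt h2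
    _ = x + 1 := Real.sqrt_sq (by positivity)

/-- The basic one-dimensional summand. -/
def Gf (c t : ℝ) (n : ℤ) : ℝ := Real.exp (-Real.sqrt |t - (n : ℝ)| / c)

lemma Gf_pos (c t : ℝ) (n : ℤ) : 0 < Gf c t n := Real.exp_pos _

lemma summable_exp_neg_sqrt_nat (c : ℝ) (hc : 0 < c) :
    Summable fun n : ℕ => Real.exp (-Real.sqrt n / c) := by
  rw [← summable_nat_add_iff 1]
  have hb : Summable fun n : ℕ => 256 * c ^ 4 * (1 / ((n : ℝ) + 1) ^ 2) := by
    apply Summable.mul_left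
    have := (summable_nat_add_iff 1).mpr (Real.summable_one_div_nat_pow.mpr one_lt_two)
    convert this using 2 with n
    · rfl
    push_cast
    ring
  apply Summable.of_nonneg_of_le (fun n => (Real.exp_pos _).le) _ hb
  intro n
  have hnpos : (0:ℝ) < (n:ℝ) + 1 := by positivity
  set y : ℝ := Real.sqrt ((n:ℝ) + 1) / c with hy
  have hynn : 0 ≤ y := by positivity
  have h4 : y ^ 4 ≤ 256 * Real.exp y := exp_pow4_aux y hynn
  have hy4 : y ^ 4 = ((n:ℝ) + 1) ^ 2 / c ^ 4 := by
    rw [hy, div_pow]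
    congr 1
    rw [show (4:ℕ) = 2 * 2 by norm_num, pow_mul, Real.sq_sqrt hnpos.le]
  have hexp : Real.exp (-Real.sqrt (((n + 1 : ℕ)):ℝ) / c) = (Real.exp y)⁻¹ := by
    rw [← Real.exp_neg]
    push_cast
    rw [hy, neg_div]
  show Real.exp (-Real.sqrt (((n + 1 : ℕ)):ℝ) / c) ≤ 256 * c ^ 4 * (1 / ((n : ℝ) + 1) ^ 2)
  rw [hexp, mul_one_div, le_div_iff₀ (by positivity : (0:ℝ) < ((n:ℝ) + 1) ^ 2),
    inv_mul_le_iff₀ (Real.exp_pos y)]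
  have hc4 : (0:ℝ) < c ^ 4 := by positivity
  have h5 : y ^ 4 * c ^ 4 = ((n:ℝ) + 1) ^ 2 := by
    rw [hy4]; field_simp
  have h6 : y ^ 4 * c ^ 4 ≤ 256 * Real.exp y * c ^ 4 :=
    mul_le_mul_of_nonneg_right h4 hc4.le
  nlinarith [h5, h6]

lemma base_int (c : ℝ) (hc : 0 < c) :
    Summable fun d : ℤ => Real.exp (-Real.sqrt |(d : ℝ)| / c) := by
  apply Summable.of_nat_of_neg
  · simpa [abs_of_nonneg, Nat.cast_nonneg] using summable_exp_neg_sqrt_nat c hc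
  · simpa [abs_of_nonpos, Nat.cast_nonneg] using summable_exp_neg_sqrt_nat c hc

/-- Uniform summability/bound for the one-dimensional sums. -/
lemma lemS (c : ℝ) (hc : 0 < c) :
    ∃ C : ℝ, 0 < C ∧ ∀ t : ℝ,
      Summable (Gf c t) ∧ ∑' n : ℤ, Gf c t n ≤ C := by
  have base := base_int c hc
  set f : ℤ → ℝ := fun d => Real.exp (-Real.sqrt |(d : ℝ)| / c) with hf
  set S0 : ℝ := ∑' d : ℤ, f d with hS0
  have hS0pos : 0 < S0 := Summable.tsum_pos base (fun i => (Real.exp_pos _).le) 0 (Real.exp_pos _)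
  refine ⟨Real.exp (1 / c) * S0, by positivity, fun t => ?_⟩
  set m : ℤ := ⌊t⌋ with hm
  have hshift : Summable fun n : ℤ => f (n - m) :=
    ((Equiv.subRight m).summable_iff (f := f)).mpr base
  have key : ∀ n : ℤ, Gf c t n ≤ Real.exp (1 / c) * f (n - m) := by
    intro n
    have habs : |((n - m : ℤ) : ℝ)| ≤ |t - n| + 1 := by
      push_cast
      have h1 : (m : ℝ) ≤ t := Int.floor_le t
      have h2 : t < (m : ℝ) + 1 := Int.lt_floor_add_one t
      rw [abs_le]
      constructor <;> cases' abs_le.mp (le_refl |t - (n:ℝ)|) with hl hr <;>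
        [skip; skip] <;> nlinarith [abs_nonneg (t - (n:ℝ)), le_abs_self (t - (n:ℝ)),
          neg_abs_le (t - (n:ℝ))]
    have hsq : Real.sqrt |((n - m : ℤ) : ℝ)| ≤ Real.sqrt |t - n| + 1 := by
      calc Real.sqrt |((n - m : ℤ) : ℝ)| ≤ Real.sqrt (|t - n| + 1) :=
            Real.sqrt_le_sqrt habs
        _ ≤ Real.sqrt |t - n| + 1 := sqrt_add_one_le_aux _ (abs_nonneg _)
    rw [Gf, hf, ← Real.exp_add]
    apply Real.exp_le_exp.mpr
    rw [← add_div]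
    gcongr
    linarith [hsq]
  have hsummable : Summable (Gf c t) :=
    Summable.of_nonneg_of_le (fun n => (Gf_pos c t n).le) key (hshift.mul_left _)
  refine ⟨hsummable, ?_⟩
  calc ∑' n : ℤ, Gf c t n
      ≤ ∑' n : ℤ, Real.exp (1 / c) * f (n - m) :=
        Summable.tsum_le_tsum key hsummable (hshift.mul_left _)
    _ = Real.exp (1 / c) * ∑' n : ℤ, f (n - m) := tsum_mul_left
    _ = Real.exp (1 / c) * S0 := by
        congr 1
        exact (Equiv.subRight m).tsum_eq f

lemma rpow_quarter_abs (a : ℝ) : (a ^ 4) ^ ((1:ℝ)/4) = |a| := by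
  have h : a ^ 4 = |a| ^ (4:ℕ) := by
    rw [← abs_pow]
    exact (abs_of_nonneg (by positivity)).symm
  rw [h, ← Real.rpow_natCast |a| 4, ← Real.rpow_mul (abs_nonneg a)]
  norm_num

lemma rpow_quarter_sq (a : ℝ) : (a ^ 2) ^ ((1:ℝ)/4) = Real.sqrt |a| := by
  have h : a ^ 2 = |a| ^ (2:ℕ) := by
    rw [← abs_pow]
    exact (abs_of_nonneg (by positivity)).symm
  rw [h, ← Real.rpow_natCast |a| 2, ← Real.rpow_mul (abs_nonneg a),
    Real.sqrt_eq_rpow]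
  norm_num

lemma hnorm_ge1 (x : H3) : |x.1| ≤ Hnorm x := by
  rw [Hnorm, ← rpow_quarter_abs x.1]
  exact Real.rpow_le_rpow (by positivity)
    (by nlinarith [sq_nonneg x.2.1, sq_nonneg x.2.2, sq_nonneg (x.1^2 + x.2.1^2)])
    (by norm_num)

lemma hnorm_ge2 (x : H3) : |x.2.1| ≤ Hnorm x := by
  rw [Hnorm, ← rpow_quarter_abs x.2.1]
  exact Real.rpow_le_rpow (by positivity)
    (by nlinarith [sq_nonneg x.1, sq_nonneg x.2.2, sq_nonneg (x.1^2 + x.2.1^2)])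
    (by norm_num)

lemma hnorm_ge3 (x : H3) : Real.sqrt |x.2.2| ≤ Hnorm x := by
  rw [Hnorm, ← rpow_quarter_sq x.2.2]
  exact Real.rpow_le_rpow (by positivity)
    (by nlinarith [sq_nonneg (x.1^2 + x.2.1^2)]) (by norm_num)

lemma hdist_nonneg (x y : H3) : 0 ≤ Hdist x y := by
  rw [Hdist, Hnorm]
  positivity

/-- For every `r₀ > 0` there is `C > 0` such that for all `z ∈ ℝ³`,
`Σ_{k∈ℤ³} exp(−δ(k,z)/r₀) ≤ C`. -/
theorem heisenberg_lattice_exponential_sum (r₀ : ℝ) (hr₀ : 0 < r₀) :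
    ∃ C : ℝ, 0 < C ∧ ∀ z : H3,
      Summable (fun k : ℤ × ℤ × ℤ => Real.exp (-Hdist (latticePt k) z / r₀)) ∧
      ∑' k : ℤ × ℤ × ℤ, Real.exp (-Hdist (latticePt k) z / r₀) ≤ C := by
  set c : ℝ := 3 * r₀ with hcdef
  have hc : 0 < c := by positivity
  obtain ⟨CS, hCSpos, hS⟩ := lemS c hc
  refine ⟨Real.exp (2 / c) * CS * CS * CS, by positivity, fun z => ?_⟩
  set T : ℤ → ℤ → ℝ := fun k₁ k₂ => z.2.2 + 2 * ((k₁:ℝ) * z.2.1 - (k₂:ℝ) * z.1) with hT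
  set D : ℤ × ℤ × ℤ → ℝ := fun k =>
    Real.exp (2 / c) * Gf c z.1 k.1 * Gf c z.2.1 k.2.1 * Gf c (T k.1 k.2.1) k.2.2 with hD
  have hDnn : ∀ k, 0 ≤ D k := by
    intro k
    rw [hD]
    have := (Real.exp_pos (2/c)).le
    have := (Gf_pos c z.1 k.1).le
    have := (Gf_pos c z.2.1 k.2.1).le
    have := (Gf_pos c (T k.1 k.2.1) k.2.2).le
    positivity
  -- termwise domination
  have hDom : ∀ k : ℤ × ℤ × ℤ, Real.exp (-Hdist (latticePt k) z / r₀) ≤ D k := by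
    rintro ⟨k₁, k₂, k₃⟩
    have hu : Hmul (Hinv (latticePt (k₁, k₂, k₃))) z
        = (z.1 - (k₁:ℝ), z.2.1 - (k₂:ℝ), T k₁ k₂ - (k₃:ℝ)) := by
      simp only [Hmul, Hinv, latticePt, hT, Prod.mk.injEq]
      refine ⟨by ring, by ring, by ring⟩
    have h1 : |z.1 - (k₁:ℝ)| ≤ Hdist (latticePt (k₁, k₂, k₃)) z := by
      rw [Hdist, hu]; exact hnorm_ge1 (z.1 - (k₁:ℝ), z.2.1 - (k₂:ℝ), T k₁ k₂ - (k₃:ℝ))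
    have h2 : |z.2.1 - (k₂:ℝ)| ≤ Hdist (latticePt (k₁, k₂, k₃)) z := by
      rw [Hdist, hu]; exact hnorm_ge2 (z.1 - (k₁:ℝ), z.2.1 - (k₂:ℝ), T k₁ k₂ - (k₃:ℝ))
    have h3 : Real.sqrt |T k₁ k₂ - (k₃:ℝ)| ≤ Hdist (latticePt (k₁, k₂, k₃)) z := by
      rw [Hdist, hu]; exact hnorm_ge3 (z.1 - (k₁:ℝ), z.2.1 - (k₂:ℝ), T k₁ k₂ - (k₃:ℝ))
    have e1 : Real.sqrt |z.1 - (k₁:ℝ)| ≤ |z.1 - (k₁:ℝ)| + 1 :=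
      sqrt_le_add_one_aux _ (abs_nonneg _)
    have e2 : Real.sqrt |z.2.1 - (k₂:ℝ)| ≤ |z.2.1 - (k₂:ℝ)| + 1 :=
      sqrt_le_add_one_aux _ (abs_nonneg _)
    have hexp : -Hdist (latticePt (k₁, k₂, k₃)) z / r₀ ≤
        2 / c + (-Real.sqrt |z.1 - (k₁:ℝ)| / c + (-Real.sqrt |z.2.1 - (k₂:ℝ)| / c +
          -Real.sqrt |T k₁ k₂ - (k₃:ℝ)| / c)) := by
      have h0 : -Hdist (latticePt (k₁, k₂, k₃)) z / r₀
          = (-(3 * Hdist (latticePt (k₁, k₂, k₃)) z)) / c := by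
        rw [hcdef, neg_div, neg_div]
        congr 1
        exact (mul_div_mul_left _ _ (by norm_num : (3:ℝ) ≠ 0)).symm
      rw [h0, show 2 / c + (-Real.sqrt |z.1 - (k₁:ℝ)| / c +
          (-Real.sqrt |z.2.1 - (k₂:ℝ)| / c + -Real.sqrt |T k₁ k₂ - (k₃:ℝ)| / c))
        = (2 - Real.sqrt |z.1 - (k₁:ℝ)| - Real.sqrt |z.2.1 - (k₂:ℝ)|
            - Real.sqrt |T k₁ k₂ - (k₃:ℝ)|) / c from by ring]
      gcongr
      linarith [h1, h2, h3, e1, e2]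
    calc Real.exp (-Hdist (latticePt (k₁, k₂, k₃)) z / r₀)
        ≤ Real.exp (2 / c + (-Real.sqrt |z.1 - (k₁:ℝ)| / c +
            (-Real.sqrt |z.2.1 - (k₂:ℝ)| / c + -Real.sqrt |T k₁ k₂ - (k₃:ℝ)| / c))) :=
          Real.exp_le_exp.mpr hexp
      _ = D (k₁, k₂, k₃) := by
          rw [hD]
          simp only [Gf]
          rw [Real.exp_add, Real.exp_add, Real.exp_add]
          ring
  -- summability and bound of the dominating function, by iterated one-dimensional sums
  have hsum3 : ∀ k₁ k₂ : ℤ, Summable fun k₃ : ℤ => D (k₁, k₂, k₃) :=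
    fun k₁ k₂ => ((hS (T k₁ k₂)).1).mul_left
      (Real.exp (2 / c) * Gf c z.1 k₁ * Gf c z.2.1 k₂)
  have htsum3 : ∀ k₁ k₂ : ℤ, ∑' k₃ : ℤ, D (k₁, k₂, k₃) ≤
      (Real.exp (2 / c) * Gf c z.1 k₁ * CS) * Gf c z.2.1 k₂ := by
    intro k₁ k₂
    calc ∑' k₃ : ℤ, D (k₁, k₂, k₃)
        = (Real.exp (2 / c) * Gf c z.1 k₁ * Gf c z.2.1 k₂) * ∑' k₃ : ℤ, Gf c (T k₁ k₂) k₃ := by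
          simp only [hD]; exact tsum_mul_left
      _ ≤ (Real.exp (2 / c) * Gf c z.1 k₁ * Gf c z.2.1 k₂) * CS := by
          apply mul_le_mul_of_nonneg_left (hS (T k₁ k₂)).2
          have := (Gf_pos c z.1 k₁).le
          have := (Gf_pos c z.2.1 k₂).le
          positivity
      _ = (Real.exp (2 / c) * Gf c z.1 k₁ * CS) * Gf c z.2.1 k₂ := by ring
  have hsum2 : ∀ k₁ : ℤ, Summable fun k₂ : ℤ => ∑' k₃ : ℤ, D (k₁, k₂, k₃) := by
    intro k₁
    exact Summable.of_nonneg_of_le (fun k₂ => tsum_nonneg fun k₃ => hDnn _)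
      (htsum3 k₁) (((hS z.2.1).1).mul_left _)
  have htsum2 : ∀ k₁ : ℤ, ∑' k₂ : ℤ, ∑' k₃ : ℤ, D (k₁, k₂, k₃) ≤
      (Real.exp (2 / c) * CS * CS) * Gf c z.1 k₁ := by
    intro k₁
    calc ∑' k₂ : ℤ, ∑' k₃ : ℤ, D (k₁, k₂, k₃)
        ≤ ∑' k₂ : ℤ, (Real.exp (2 / c) * Gf c z.1 k₁ * CS) * Gf c z.2.1 k₂ :=
          Summable.tsum_le_tsum (htsum3 k₁) (hsum2 k₁) (((hS z.2.1).1).mul_left _)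
      _ = (Real.exp (2 / c) * Gf c z.1 k₁ * CS) * ∑' k₂ : ℤ, Gf c z.2.1 k₂ := tsum_mul_left
      _ ≤ (Real.exp (2 / c) * Gf c z.1 k₁ * CS) * CS := by
          apply mul_le_mul_of_nonneg_left (hS z.2.1).2
          have := (Gf_pos c z.1 k₁).le
          positivity
      _ = (Real.exp (2 / c) * CS * CS) * Gf c z.1 k₁ := by ring
  have hsum1 : Summable fun k₁ : ℤ => ∑' k₂ : ℤ, ∑' k₃ : ℤ, D (k₁, k₂, k₃) :=
    Summable.of_nonneg_of_le
      (fun k₁ => tsum_nonneg fun k₂ => tsum_nonneg fun k₃ => hDnn _)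
      htsum2 (((hS z.1).1).mul_left _)
  have htsum1 : ∑' k₁ : ℤ, ∑' k₂ : ℤ, ∑' k₃ : ℤ, D (k₁, k₂, k₃) ≤
      Real.exp (2 / c) * CS * CS * CS := by
    calc ∑' k₁ : ℤ, ∑' k₂ : ℤ, ∑' k₃ : ℤ, D (k₁, k₂, k₃)
        ≤ ∑' k₁ : ℤ, (Real.exp (2 / c) * CS * CS) * Gf c z.1 k₁ :=
          Summable.tsum_le_tsum htsum2 hsum1 (((hS z.1).1).mul_left _)
      _ = (Real.exp (2 / c) * CS * CS) * ∑' k₁ : ℤ, Gf c z.1 k₁ := tsum_mul_left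
      _ ≤ (Real.exp (2 / c) * CS * CS) * CS := by
          apply mul_le_mul_of_nonneg_left (hS z.1).2
          positivity
  have hsumfib : ∀ k₁ : ℤ, Summable fun p : ℤ × ℤ => D (k₁, p) := by
    intro k₁
    exact (summable_prod_of_nonneg (fun p => hDnn _)).mpr ⟨fun k₂ => hsum3 k₁ k₂, hsum2 k₁⟩
  have hrwfib : ∀ k₁ : ℤ, ∑' p : ℤ × ℤ, D (k₁, p) = ∑' k₂ : ℤ, ∑' k₃ : ℤ, D (k₁, k₂, k₃) :=
    fun k₁ => Summable.tsum_prod' (hsumfib k₁) (hsum3 k₁)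
  have hDsum : Summable D := by
    apply (summable_prod_of_nonneg fun k => hDnn k).mpr
    refine ⟨hsumfib, ?_⟩
    apply Summable.of_nonneg_of_le (fun k₁ => tsum_nonneg fun p => hDnn _) ?_ hsum1
    intro k₁
    exact le_of_eq (hrwfib k₁)
  have hDtsum : ∑' k : ℤ × ℤ × ℤ, D k ≤ Real.exp (2 / c) * CS * CS * CS := by
    rw [Summable.tsum_prod' hDsum hsumfib]
    calc ∑' k₁ : ℤ, ∑' p : ℤ × ℤ, D (k₁, p)
        = ∑' k₁ : ℤ, ∑' k₂ : ℤ, ∑' k₃ : ℤ, D (k₁, k₂, k₃) := tsum_congr hrwfib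
      _ ≤ _ := htsum1
  have hfsum : Summable (fun k : ℤ × ℤ × ℤ => Real.exp (-Hdist (latticePt k) z / r₀)) :=
    Summable.of_nonneg_of_le (fun k => (Real.exp_pos _).le) hDom hDsum
  exact ⟨hfsum, le_trans (Summable.tsum_le_tsum hDom hfsum hDsum) hDtsum⟩

end
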